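/- For even positive integers q and M, the number of pairs (M₂, c) where M₂ is a perfect matching of {1,…,q} and c is an M-coloring of {1,…,q} that is constant on every connected component of the graph with edge set M₀ ∪ M₂ (M₀ the canonical matching {{1,2},{3,4},…,{q−1,q}}), equals (M+q−2)!!/(M−2)!! = (M+q−2)(M+q−4)⋯(M+2)M. -/

import Mathlib

namespace MatchColorAux

section
variable {M n : ℕ}

abbrev Cnd (M n : ℕ) (f : Fin n × Bool → Fin n × Bool) (c : Fin n × Bool → Fin M) : Prop :=
  (∀ v, f (f v) = v) ∧ (∀ v, f v ≠ v) ∧ (∀ v, c (f v) = c v) ∧ (∀ v, c (v.1, !v.2) = c v)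

abbrev PP (M n : ℕ) :=
  {p : (Fin n × Bool → Fin n × Bool) × (Fin n × Bool → Fin M) // Cnd M n p.1 p.2}

def inc (x : Fin n × Bool) : Fin (n+1) × Bool := (x.1.castSucc, x.2)

lemma inc_fst_ne_last (x : Fin n × Bool) : (inc x).1 ≠ Fin.last n :=
  (Fin.castSucc_lt_last x.1).ne

lemma inc_inj : Function.Injective (inc (n := n)) := by
  intro a b h
  rw [Prod.ext_iff] at h ⊢
  exact ⟨Fin.castSucc_injective _ h.1, h.2⟩

lemma inc_ne_last (x : Fin n × Bool) (b : Bool) : inc x ≠ (Fin.last n, b) := by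
  intro h
  exact inc_fst_ne_last x (by rw [h])

lemma cases' (y : Fin (n+1) × Bool) : (∃ b, y = (Fin.last n, b)) ∨ ∃ x, y = inc x := by
  rcases eq_or_ne y.1 (Fin.last n) with h | h
  · exact Or.inl ⟨y.2, by rw [← h]⟩
  · exact Or.inr ⟨(y.1.castPred h, y.2), by simp [inc]⟩

lemma inc_castPred (y : Fin (n+1) × Bool) (h : y.1 ≠ Fin.last n) :
    inc (y.1.castPred h, y.2) = y := by simp [inc]

/-! Case A construction -/

def fA (f' : Fin n × Bool → Fin n × Bool) (y : Fin (n+1) × Bool) : Fin (n+1) × Bool :=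
  if h : y.1 = Fin.last n then (Fin.last n, !y.2)
  else inc (f' (y.1.castPred h, y.2))

def cA (c' : Fin n × Bool → Fin M) (m : Fin M) (y : Fin (n+1) × Bool) : Fin M :=
  if h : y.1 = Fin.last n then m else c' (y.1.castPred h, y.2)

lemma fA_last (f' : Fin n × Bool → Fin n × Bool) (b : Bool) :
    fA f' (Fin.last n, b) = (Fin.last n, !b) := by simp [fA]

lemma castPred_inc (x : Fin n × Bool) (h : (inc x).1 ≠ Fin.last n) :
    ((inc x).1.castPred h, (inc x).2) = x :=
  inc_inj (by rw [inc_castPred])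

lemma fA_inc (f' : Fin n × Bool → Fin n × Bool) (x : Fin n × Bool) :
    fA f' (inc x) = inc (f' x) := by
  rw [fA, dif_neg (inc_fst_ne_last x), castPred_inc]

lemma cA_last (c' : Fin n × Bool → Fin M) (m : Fin M) (b : Bool) :
    cA c' m (Fin.last n, b) = m := by simp [cA]

lemma cA_inc (c' : Fin n × Bool → Fin M) (m : Fin M) (x : Fin n × Bool) :
    cA c' m (inc x) = c' x := by
  rw [cA, dif_neg (inc_fst_ne_last x), castPred_inc]

/-! Case B construction -/

def fB (f' : Fin n × Bool → Fin n × Bool) (w : Fin n × Bool) (y : Fin (n+1) × Bool) :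
    Fin (n+1) × Bool :=
  if h : y.1 = Fin.last n then (if y.2 then inc w else inc (f' w))
  else if (y.1.castPred h, y.2) = w then (Fin.last n, true)
  else if (y.1.castPred h, y.2) = f' w then (Fin.last n, false)
  else inc (f' (y.1.castPred h, y.2))

def cB (c' : Fin n × Bool → Fin M) (w : Fin n × Bool) (y : Fin (n+1) × Bool) : Fin M :=
  if h : y.1 = Fin.last n then c' w else c' (y.1.castPred h, y.2)

lemma fB_last_true (f' : Fin n × Bool → Fin n × Bool) (w : Fin n × Bool) :
    fB f' w (Fin.last n, true) = inc w := by simp [fB]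

lemma fB_last_false (f' : Fin n × Bool → Fin n × Bool) (w : Fin n × Bool) :
    fB f' w (Fin.last n, false) = inc (f' w) := by simp [fB]

lemma fB_inc (f' : Fin n × Bool → Fin n × Bool) (w x : Fin n × Bool) :
    fB f' w (inc x) = (if x = w then (Fin.last n, true)
      else if x = f' w then (Fin.last n, false) else inc (f' x)) := by
  rw [fB, dif_neg (inc_fst_ne_last x), castPred_inc]

lemma cB_last (c' : Fin n × Bool → Fin M) (w : Fin n × Bool) (b : Bool) :
    cB c' w (Fin.last n, b) = c' w := by simp [cB]

lemma cB_inc (c' : Fin n × Bool → Fin M) (w x : Fin n × Bool) :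
    cB c' w (inc x) = c' x := by
  rw [cB, dif_neg (inc_fst_ne_last x), castPred_inc]

/-! Conditions preserved -/

lemma condA {f' : Fin n × Bool → Fin n × Bool} {c' : Fin n × Bool → Fin M}
    (h : Cnd M n f' c') (m : Fin M) : Cnd M (n+1) (fA f') (cA c' m) := by
  obtain ⟨h1, h2, h3, h4⟩ := h
  refine ⟨?_, ?_, ?_, ?_⟩
  · intro v
    rcases cases' v with ⟨b, rfl⟩ | ⟨x, rfl⟩
    · rw [fA_last, fA_last, Bool.not_not]
    · rw [fA_inc, fA_inc, h1]
  · intro v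
    rcases cases' v with ⟨b, rfl⟩ | ⟨x, rfl⟩
    · rw [fA_last]; simp
    · rw [fA_inc]; intro hh; exact h2 x (inc_inj hh)
  · intro v
    rcases cases' v with ⟨b, rfl⟩ | ⟨x, rfl⟩
    · rw [fA_last, cA_last, cA_last]
    · rw [fA_inc, cA_inc, cA_inc, h3]
  · intro v
    rcases cases' v with ⟨b, rfl⟩ | ⟨x, rfl⟩
    · show cA c' m (Fin.last n, !b) = _
      rw [cA_last, cA_last]
    · show cA c' m (inc (x.1, !x.2)) = _
      rw [cA_inc, cA_inc, h4]

lemma condB {f' : Fin n × Bool → Fin n × Bool} {c' : Fin n × Bool → Fin M}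
    (h : Cnd M n f' c') (w : Fin n × Bool) : Cnd M (n+1) (fB f' w) (cB c' w) := by
  obtain ⟨h1, h2, h3, h4⟩ := h
  have hinj : Function.Injective f' := Function.LeftInverse.injective h1
  have huw : f' w ≠ w := h2 w
  refine ⟨?_, ?_, ?_, ?_⟩
  · intro v
    rcases cases' v with ⟨b, rfl⟩ | ⟨x, rfl⟩
    · cases b
      · rw [fB_last_false, fB_inc, if_neg huw, if_pos rfl]
      · rw [fB_last_true, fB_inc, if_pos rfl]
    · rw [fB_inc]
      by_cases hxw : x = w
      · rw [if_pos hxw, fB_last_true, hxw]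
      · by_cases hxu : x = f' w
        · rw [if_neg hxw, if_pos hxu, fB_last_false, hxu]
        · rw [if_neg hxw, if_neg hxu, fB_inc]
          have n1 : f' x ≠ w := fun hh => hxu (by rw [← hh, h1])
          have n2 : f' x ≠ f' w := fun hh => hxw (hinj hh)
          rw [if_neg n1, if_neg n2, h1]
  · intro v
    rcases cases' v with ⟨b, rfl⟩ | ⟨x, rfl⟩
    · cases b
      · rw [fB_last_false]; exact inc_ne_last _ _
      · rw [fB_last_true]; exact inc_ne_last _ _
    · rw [fB_inc]
      by_cases hxw : x = w
      · rw [if_pos hxw]; exact fun hh => inc_ne_last x true hh.symm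
      · by_cases hxu : x = f' w
        · rw [if_neg hxw, if_pos hxu]
          exact fun hh => (inc_ne_last x false) hh.symm
        · rw [if_neg hxw, if_neg hxu]
          exact fun hh => h2 x (inc_inj hh)
  · intro v
    rcases cases' v with ⟨b, rfl⟩ | ⟨x, rfl⟩
    · cases b
      · rw [fB_last_false, cB_inc, cB_last, h3]
      · rw [fB_last_true, cB_inc, cB_last]
    · rw [fB_inc]
      by_cases hxw : x = w
      · rw [if_pos hxw, cB_last, cB_inc, hxw]
      · by_cases hxu : x = f' w
        · rw [if_neg hxw, if_pos hxu, cB_last, cB_inc, hxu, h3]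
        · rw [if_neg hxw, if_neg hxu, cB_inc, cB_inc, h3]
  · intro v
    rcases cases' v with ⟨b, rfl⟩ | ⟨x, rfl⟩
    · show cB c' w (Fin.last n, !b) = _
      rw [cB_last, cB_last]
    · show cB c' w (inc (x.1, !x.2)) = _
      rw [cB_inc, cB_inc, h4]

/-! The bijection -/

def Phi (p : PP M n × (Fin M ⊕ Fin n × Bool)) : PP M (n+1) :=
  match p with
  | ⟨⟨(f', c'), hp⟩, Sum.inl m⟩ => ⟨(fA f', cA c' m), condA hp m⟩
  | ⟨⟨(f', c'), hp⟩, Sum.inr w⟩ => ⟨(fB f' w, cB c' w), condB hp w⟩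

lemma Phi_inj : Function.Injective (Phi (M := M) (n := n)) := by
  rintro ⟨⟨⟨f1, c1⟩, hp1⟩, s1 | s1⟩ ⟨⟨⟨f2, c2⟩, hp2⟩, s2 | s2⟩ h <;>
    rw [Phi, Phi, Subtype.mk.injEq, Prod.mk.injEq] at h <;> obtain ⟨hf, hc⟩ := h
  · -- inl / inl
    have hm : s1 = s2 := by
      have := congrFun hc (Fin.last n, true)
      rwa [cA_last, cA_last] at this
    have hff : f1 = f2 := by
      funext x
      have := congrFun hf (inc x)
      rw [fA_inc, fA_inc] at this
      exact inc_inj this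
    have hcc : c1 = c2 := by
      funext x
      have := congrFun hc (inc x)
      rwa [cA_inc, cA_inc] at this
    subst hm; subst hff; subst hcc; rfl
  · -- inl / inr : impossible
    exfalso
    have := congrFun hf (Fin.last n, true)
    rw [fA_last, fB_last_true] at this
    exact inc_ne_last s2 _ this.symm
  · -- inr / inl : impossible
    exfalso
    have := congrFun hf (Fin.last n, true)
    rw [fA_last, fB_last_true] at this
    exact inc_ne_last s1 _ this
  · -- inr / inr
    have hw : s1 = s2 := by
      have := congrFun hf (Fin.last n, true)
      rw [fB_last_true, fB_last_true] at this
      exact inc_inj this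
    subst hw
    have hu : f1 s1 = f2 s1 := by
      have := congrFun hf (Fin.last n, false)
      rw [fB_last_false, fB_last_false] at this
      exact inc_inj this
    have hff : f1 = f2 := by
      funext x
      by_cases hxw : x = s1
      · rw [hxw]; exact hu
      · by_cases hxu : x = f1 s1
        · rw [hxu]
          have e1 : f1 (f1 s1) = s1 := hp1.1 s1
          have e2 : f2 (f2 s1) = s1 := hp2.1 s1
          rw [e1, hu, e2]
        · have := congrFun hf (inc x)
          rw [fB_inc, fB_inc, if_neg hxw, if_neg hxw, if_neg hxu,
            if_neg (by rw [← hu]; exact hxu)] at this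
          exact inc_inj this
    have hcc : c1 = c2 := by
      funext x
      have := congrFun hc (inc x)
      rwa [cB_inc, cB_inc] at this
    subst hff; subst hcc; rfl

lemma pair_eq {α β : Type*} {y : α × β} {a : α} {b : β} (h : y.1 = a) (h' : y.2 = b) :
    y = (a, b) := by rw [← h, ← h']

lemma Phi_surj : Function.Surjective (Phi (M := M) (n := n)) := by
  rintro ⟨⟨f, c⟩, h1, h2, h3, h4⟩
  replace h1 : ∀ v, f (f v) = v := h1
  replace h2 : ∀ v, f v ≠ v := h2
  replace h3 : ∀ v, c (f v) = c v := h3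
  replace h4 : ∀ v : Fin (n+1) × Bool, c (v.1, !v.2) = c v := h4
  have hfinj : Function.Injective f := Function.LeftInverse.injective h1
  have hcol : c (Fin.last n, false) = c (Fin.last n, true) := h4 (Fin.last n, true)
  by_cases hA : f (Fin.last n, true) = (Fin.last n, false)
  · -- Case A : top matched to bot
    have hbot : f (Fin.last n, false) = (Fin.last n, true) := by
      rw [← hA]; exact h1 _
    have hne : ∀ x : Fin n × Bool, (f (inc x)).1 ≠ Fin.last n := by
      intro x hx
      cases hb : (f (inc x)).2 with
      | false => exact inc_ne_last x true (hfinj ((pair_eq hx hb).trans hA.symm))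
      | true => exact inc_ne_last x false (hfinj ((pair_eq hx hb).trans hbot.symm))
    set f' : Fin n × Bool → Fin n × Bool :=
      fun x => ((f (inc x)).1.castPred (hne x), (f (inc x)).2) with hf'def
    have key : ∀ x, inc (f' x) = f (inc x) := fun x => inc_castPred _ (hne x)
    set c' : Fin n × Bool → Fin M := fun x => c (inc x) with hc'def
    have hcnd : Cnd M n f' c' := by
      refine ⟨?_, ?_, ?_, ?_⟩
      · intro x
        apply inc_inj
        rw [key, key, h1]
      · intro x hx
        exact h2 (inc x) (by rw [← key, hx])
      · intro x
        show c (inc (f' x)) = c (inc x)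
        rw [key, h3]
      · intro x
        exact h4 (inc x)
    refine ⟨⟨⟨(f', c'), hcnd⟩, Sum.inl (c (Fin.last n, true))⟩, ?_⟩
    rw [Phi, Subtype.mk.injEq, Prod.mk.injEq]
    constructor
    · funext y
      rcases cases' y with ⟨b, rfl⟩ | ⟨x, rfl⟩
      · cases b
        · simp [fA_last, hbot]
        · simp [fA_last, hA]
      · rw [fA_inc, key]
    · funext y
      rcases cases' y with ⟨b, rfl⟩ | ⟨x, rfl⟩
      · cases b
        · rw [cA_last, hcol]
        · rw [cA_last]
      · rw [cA_inc]
  · -- Case B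
    have htopne : f (Fin.last n, true) ≠ (Fin.last n, true) := h2 _
    have htop : (f (Fin.last n, true)).1 ≠ Fin.last n := by
      intro hx
      cases hb : (f (Fin.last n, true)).2 with
      | false => exact hA (pair_eq hx hb)
      | true => exact htopne (pair_eq hx hb)
    have hbotne1 : f (Fin.last n, false) ≠ (Fin.last n, true) := by
      intro hh
      apply hA
      rw [← hh, h1]
    have hbotne2 : f (Fin.last n, false) ≠ (Fin.last n, false) := h2 _
    have hbot : (f (Fin.last n, false)).1 ≠ Fin.last n := by
      intro hx
      cases hb : (f (Fin.last n, false)).2 with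
      | false => exact hbotne2 (pair_eq hx hb)
      | true => exact hbotne1 (pair_eq hx hb)
    set w : Fin n × Bool := ((f (Fin.last n, true)).1.castPred htop, (f (Fin.last n, true)).2)
      with hwdef
    have hw : inc w = f (Fin.last n, true) := inc_castPred _ htop
    set u : Fin n × Bool := ((f (Fin.last n, false)).1.castPred hbot, (f (Fin.last n, false)).2)
      with hudef
    have hu : inc u = f (Fin.last n, false) := inc_castPred _ hbot
    have hfw : f (inc w) = (Fin.last n, true) := by rw [hw]; exact h1 _
    have hfu : f (inc u) = (Fin.last n, false) := by rw [hu]; exact h1 _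
    have hwu : u ≠ w := by
      intro e
      have : f (inc u) = f (inc w) := by rw [e]
      rw [hfu, hfw] at this
      simp at this
    have hne : ∀ x : Fin n × Bool, x ≠ w → x ≠ u → (f (inc x)).1 ≠ Fin.last n := by
      intro x hxw hxu hx
      cases hb : (f (inc x)).2 with
      | false => exact hxu (inc_inj (hfinj ((pair_eq hx hb).trans hfu.symm)))
      | true => exact hxw (inc_inj (hfinj ((pair_eq hx hb).trans hfw.symm)))
    set f' : Fin n × Bool → Fin n × Bool := fun x =>
      if hxw : x = w then u
      else if hxu : x = u then w
      else ((f (inc x)).1.castPred (hne x hxw hxu), (f (inc x)).2) with hf'def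
    have f'w : f' w = u := by rw [hf'def]; simp
    have f'u : f' u = w := by rw [hf'def]; simp [hwu]
    have key : ∀ x, x ≠ w → x ≠ u → inc (f' x) = f (inc x) := by
      intro x hxw hxu
      rw [hf'def]
      simp only [dif_neg hxw, dif_neg hxu]
      exact inc_castPred _ (hne x hxw hxu)
    have hnw : ∀ x, x ≠ w → x ≠ u → f' x ≠ w := by
      intro x hxw hxu hh
      have e : f (inc x) = inc w := by rw [← key x hxw hxu, hh]
      have e2 : inc x = (Fin.last n, true) := by rw [← h1 (inc x), e, hfw]
      exact inc_ne_last x true e2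
    have hnu : ∀ x, x ≠ w → x ≠ u → f' x ≠ u := by
      intro x hxw hxu hh
      have e : f (inc x) = inc u := by rw [← key x hxw hxu, hh]
      have e2 : inc x = (Fin.last n, false) := by rw [← h1 (inc x), e, hfu]
      exact inc_ne_last x false e2
    set c' : Fin n × Bool → Fin M := fun x => c (inc x) with hc'def
    have hcw : c (inc w) = c (Fin.last n, true) := by rw [hw]; exact h3 _
    have hcu : c (inc u) = c (Fin.last n, false) := by rw [hu]; exact h3 _
    have hcnd : Cnd M n f' c' := by
      refine ⟨?_, ?_, ?_, ?_⟩
      · intro x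
        by_cases hxw : x = w
        · rw [hxw, f'w, f'u]
        · by_cases hxu : x = u
          · rw [hxu, f'u, f'w]
          · apply inc_inj
            rw [key _ (hnw x hxw hxu) (hnu x hxw hxu), key _ hxw hxu, h1]
      · intro x hh
        by_cases hxw : x = w
        · rw [hxw, f'w] at hh; exact hwu hh
        · by_cases hxu : x = u
          · rw [hxu, f'u] at hh; exact hwu hh.symm
          · exact h2 (inc x) (by rw [← key x hxw hxu, hh])
      · intro x
        show c (inc (f' x)) = c (inc x)
        by_cases hxw : x = w
        · rw [hxw, f'w, hcu, hcw, hcol]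
        · by_cases hxu : x = u
          · rw [hxu, f'u, hcw, hcu, hcol]
          · rw [key x hxw hxu, h3]
      · intro x
        exact h4 (inc x)
    refine ⟨⟨⟨(f', c'), hcnd⟩, Sum.inr w⟩, ?_⟩
    rw [Phi, Subtype.mk.injEq, Prod.mk.injEq]
    constructor
    · funext y
      rcases cases' y with ⟨b, rfl⟩ | ⟨x, rfl⟩
      · cases b
        · rw [fB_last_false, f'w, hu]
        · rw [fB_last_true, hw]
      · rw [fB_inc]
        by_cases hxw : x = w
        · rw [if_pos hxw, hxw, hfw]
        · by_cases hxu : x = u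
          · rw [if_neg hxw, if_pos (show x = f' w by rw [hxu, f'w]), hxu, hfu]
          · rw [if_neg hxw, if_neg (show ¬ x = f' w from fun hh => hxu (by rw [hh, f'w])),
              key x hxw hxu]
    · funext y
      rcases cases' y with ⟨b, rfl⟩ | ⟨x, rfl⟩
      · cases b
        · rw [cB_last]
          show c (inc w) = _
          rw [hcw, hcol]
        · rw [cB_last]
          show c (inc w) = _
          rw [hcw]
      · rw [cB_inc]

lemma card_step : Nat.card (PP M (n+1)) = Nat.card (PP M n) * (M + 2 * n) := by
  have e : PP M n × (Fin M ⊕ Fin n × Bool) ≃ PP M (n+1) :=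
    Equiv.ofBijective _ ⟨Phi_inj, Phi_surj⟩
  rw [← Nat.card_congr e, Nat.card_prod, Nat.card_sum]
  simp only [Nat.card_eq_fintype_card, Fintype.card_fin, Fintype.card_prod, Fintype.card_bool]
  ring

instance : Unique (PP M 0) where
  default := ⟨(id, fun v => v.1.elim0), fun v => v.1.elim0, fun v => v.1.elim0,
    fun v => v.1.elim0, fun v => v.1.elim0⟩
  uniq := by
    rintro ⟨⟨f, c⟩, -⟩
    apply Subtype.ext
    apply Prod.ext
    · funext v; exact v.1.elim0
    · funext v; exact v.1.elim0

lemma card_PP (M n : ℕ) : Nat.card (PP M n) = ∏ k ∈ Finset.range n, (M + 2 * k) := by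
  induction n with
  | zero => simp [Nat.card_unique]
  | succ n ih => rw [card_step, ih, Finset.prod_range_succ]

end

end MatchColorAux


open Finset

/-- Counting pairs `(M₂, c)` of a perfect matching `M₂` of a set of `q = 2n` vertices
(encoded as `Fin n × Bool`, with canonical matching `M₀` pairing `(k, b)` with `(k, !b)`)
together with an `M`-coloring `c` that is constant on each connected component of the
graph with edge set `M₀ ∪ M₂`: the count is `(M+q-2)!!/(M-2)!! = ∏_{k<n} (M + 2k)`.
A perfect matching is encoded as a fixed-point-free involution, and constancy on components
is equivalent to invariance of `c` under both involutions. -/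
theorem matching_coloring_count (n M : ℕ) (hn : 0 < n) (hM : 0 < M) (hMeven : Even M) :
    Nat.card {p : (Fin n × Bool → Fin n × Bool) × (Fin n × Bool → Fin M) //
      (∀ v, p.1 (p.1 v) = v) ∧ (∀ v, p.1 v ≠ v) ∧
      (∀ v, p.2 (p.1 v) = p.2 v) ∧ (∀ v, p.2 (v.1, !v.2) = p.2 v)} =
    ∏ k ∈ Finset.range n, (M + 2 * k) :=
  MatchColorAux.card_PP M n
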